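/- Let (ξ_t)_{t≥0} be a nonnegative sequence satisfying ξ_{t+1} ≤ (1 − 3/(t+β))·ξ_t + C/(t+β)² for all t ≥ 0, where β ≥ 2 and C ≥ 0. Then for all T ≥ 1, ξ_T ≤ (β−1)²·ξ_0/(T+β−1)² + C·T/(T+β−1)². -/

import Mathlib

theorem sgd_recursion_bound (ξ : ℕ → ℝ) (β C : ℝ) (hβ : 2 ≤ β) (hC : 0 ≤ C)
    (hξ : ∀ t, 0 ≤ ξ t)
    (hrec : ∀ t : ℕ, ξ (t + 1) ≤ (1 - 3 / ((t : ℝ) + β)) * ξ t + C / ((t : ℝ) + β) ^ 2) :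
    ∀ T : ℕ, 1 ≤ T →
      ξ T ≤ (β - 1) ^ 2 * ξ 0 / ((T : ℝ) + β - 1) ^ 2 + C * (T : ℝ) / ((T : ℝ) + β - 1) ^ 2 := by
  have key : ∀ T : ℕ, ((T : ℝ) + β - 1) ^ 2 * ξ T ≤ (β - 1) ^ 2 * ξ 0 + C * T := by
    intro T
    induction T with
    | zero => simp
    | succ n ih =>
      have hpos : (0 : ℝ) < (n : ℝ) + β := by positivity
      have h := hrec n
      have hstep : ((n : ℝ) + β) ^ 2 * ξ (n + 1) ≤ ((n : ℝ) + β - 1) ^ 2 * ξ n + C := by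
        have h1 : ((n : ℝ) + β) ^ 2 * ξ (n + 1) ≤
            ((n : ℝ) + β) ^ 2 * ((1 - 3 / ((n : ℝ) + β)) * ξ n + C / ((n : ℝ) + β) ^ 2) := by
          apply mul_le_mul_of_nonneg_left h (by positivity)
        have h2 : ((n : ℝ) + β) ^ 2 * ((1 - 3 / ((n : ℝ) + β)) * ξ n + C / ((n : ℝ) + β) ^ 2)
            = (((n : ℝ) + β) * (((n : ℝ) + β) - 3)) * ξ n + C := by
          field_simp
        rw [h2] at h1
        have h3 : (((n : ℝ) + β) * (((n : ℝ) + β) - 3)) * ξ n ≤ ((n : ℝ) + β - 1) ^ 2 * ξ n := by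
          apply mul_le_mul_of_nonneg_right _ (hξ n)
          nlinarith
        linarith
      push_cast
      have : ((n : ℝ) + 1 + β - 1) ^ 2 = ((n : ℝ) + β) ^ 2 := by ring
      rw [this]
      linarith
  intro T hT
  have hpos : (0 : ℝ) < ((T : ℝ) + β - 1) ^ 2 := by
    have : (1 : ℝ) ≤ (T : ℝ) := by exact_mod_cast hT
    nlinarith
  rw [← add_div, le_div_iff₀ hpos]
  linarith [key T]
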